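/- Let F be a field of characteristic 2, n ≥ 1, and let (x_1, …, x_n) be additive shares with x := x_1 + ⋯ + x_n ≠ 0. Let (m_1, …, m_n) be the output of the B2M conversion on (x_1, …, x_n) for any choice of nonzero values m_2, …, m_n ∈ F^× and any randomness. Then every output share m_i is nonzero, and the share-wise inverses p_i := m_i^{-1} satisfy p_1 · p_2 ⋯ p_n = x^{-1}. (Functional correctness of the B2Minv gadget: for a nonzero shared input, it outputs a multiplicative sharing of the inverse of the shared value.) -/

import Mathlib

/-- Inner loop of the B2M conversion for a fixed outer index `j` (see `B2M`). -/
def B2Minner {F : Type*} [Field F] (mj : F) (r : ℕ → F)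
    (st : F × (ℕ → F)) (ks : List ℕ) : F × (ℕ → F) :=
  ks.foldl (fun st k =>
    (st.1 + (mj * st.2 k + r k), Function.update st.2 k (r k))) st

/-- One outer iteration (index `j`) of the B2M conversion. -/
def B2Mstep {F : Type*} [Field F] (n : ℕ) (m : ℕ → F) (r : ℕ → ℕ → F)
    (st : F × (ℕ → F)) (j : ℕ) : F × (ℕ → F) :=
  let st1 : F × (ℕ → F) := (st.1 * m j, st.2)
  let st2 := B2Minner (m j) (r j) st1 (List.range' 2 (n - j))
  (st2.1 + m j * st2.2 (n - j + 2), st2.2)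

/-- The Genelle–Prouff–Quisquater Boolean-to-multiplicative conversion:
initialize `m₁ := x 1` and run the outer loop for `j = 2, …, n`.  Its first component
is the final value of `m₁`; the remaining output shares are the inverses `(m j)⁻¹`
for `j = 2, …, n`. -/
def B2M {F : Type*} [Field F] (n : ℕ) (x : ℕ → F) (m : ℕ → F) (r : ℕ → ℕ → F) :
    F × (ℕ → F) :=
  (List.range' 2 (n - 1)).foldl (B2Mstep n m r) (x 1, x)

lemma inner_spec {F : Type*} [Field F] (mj : F) (r : ℕ → F) (L : ℕ) (a : F) (f : ℕ → F) :
    B2Minner mj r (a, f) (List.range' 2 L)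
      = (a + ∑ k ∈ Finset.Icc 2 (L + 1), (mj * f k + r k),
         fun k => if k ∈ Finset.Icc 2 (L + 1) then r k else f k) := by
  induction L with
  | zero =>
      have h : Finset.Icc 2 1 = (∅ : Finset ℕ) := by decide
      simp [B2Minner, h]
  | succ L ih =>
      rw [show List.range' 2 (L + 1) = List.range' 2 L ++ [2 + L] by
        simpa using List.range'_concat (step := 1) (s := 2) (n := L)]
      unfold B2Minner at *
      rw [List.foldl_concat, ih]
      have hmem : (2 + L) ∉ Finset.Icc 2 (L + 1) := by
        simp [Finset.mem_Icc]; omega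
      have h2 : L + 1 + 1 = 2 + L := by omega
      simp only [Prod.mk.injEq]
      constructor
      · rw [if_neg hmem]
        conv_rhs => rw [Finset.sum_Icc_succ_top (by omega)]
        rw [h2]
        ring
      · funext k
        rcases eq_or_ne k (2 + L) with hk | hk
        · subst hk
          rw [Function.update_self, if_pos (by simp [Finset.mem_Icc]; omega)]
        · rw [Function.update_of_ne hk]
          by_cases hk2 : k ∈ Finset.Icc 2 (L + 1)
          · rw [if_pos hk2, if_pos (by simp [Finset.mem_Icc] at *; omega)]
          · rw [if_neg hk2, if_neg (by simp [Finset.mem_Icc] at *; omega)]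

lemma step_spec {F : Type*} [Field F] (n : ℕ) (m : ℕ → F) (r : ℕ → ℕ → F)
    (st : F × (ℕ → F)) (j : ℕ) :
    B2Mstep n m r st j
      = (st.1 * m j + ∑ k ∈ Finset.Icc 2 (n - j + 1), (m j * st.2 k + r j k)
           + m j * st.2 (n - j + 2),
         fun k => if k ∈ Finset.Icc 2 (n - j + 1) then r j k else st.2 k) := by
  have hmem : (n - j + 2) ∉ Finset.Icc 2 (n - j + 1) := by
    simp [Finset.mem_Icc]
  unfold B2Mstep
  dsimp only
  rw [inner_spec]
  simp [hmem]

lemma outer_inv {F : Type*} [Field F] [CharP F 2] (n : ℕ) (hn : 1 ≤ n)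
    (x m : ℕ → F) (r : ℕ → ℕ → F) (t : ℕ) (ht : t + 1 ≤ n) :
    ((List.range' 2 t).foldl (B2Mstep n m r) (x 1, x)).1
      + ∑ k ∈ Finset.Icc 2 (n - t), ((List.range' 2 t).foldl (B2Mstep n m r) (x 1, x)).2 k
      = (∏ j ∈ Finset.Icc 2 (t + 1), m j) * ∑ i ∈ Finset.Icc 1 n, x i := by
  induction t with
  | zero =>
      have h1 : Finset.Icc 1 n = insert 1 (Finset.Icc 2 n) := by
        ext k; simp [Finset.mem_Icc]; omega
      have h2 : Finset.Icc 2 (0 + 1) = (∅ : Finset ℕ) := by decide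
      have h3 : (1 : ℕ) ∉ Finset.Icc 2 n := by
        simp [Finset.mem_Icc]
      simp [h1, h2, Finset.sum_insert h3]
  | succ t ih =>
      have ht' : t + 1 ≤ n := by omega
      specialize ih ht'
      rw [show List.range' 2 (t + 1) = List.range' 2 t ++ [2 + t] by
        simpa using List.range'_concat (step := 1) (s := 2) (n := t)]
      rw [List.foldl_concat, step_spec]
      set st := (List.range' 2 t).foldl (B2Mstep n m r) (x 1, x) with hst
      have e1 : n - (2 + t) + 1 = n - (t + 1) := by omega
      have e2 : n - (2 + t) + 2 = n - t := by omega
      have e3 : n - t = (n - (t + 1)) + 1 := by omega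
      simp only [e1, e2]
      have hsum : ∑ k ∈ Finset.Icc 2 (n - (t + 1)),
          (if k ∈ Finset.Icc 2 (n - (t + 1)) then r (2 + t) k else st.2 k)
          = ∑ k ∈ Finset.Icc 2 (n - (t + 1)), r (2 + t) k :=
        Finset.sum_congr rfl (fun k hk => by rw [if_pos hk])
      rw [hsum]
      have hsplit : ∑ k ∈ Finset.Icc 2 (n - t), st.2 k
          = ∑ k ∈ Finset.Icc 2 (n - (t + 1)), st.2 k + st.2 (n - t) := by
        rw [e3]
        exact Finset.sum_Icc_succ_top (by omega) _
      have hprod : ∏ j ∈ Finset.Icc 2 (t + 1 + 1), m j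
          = (∏ j ∈ Finset.Icc 2 (t + 1), m j) * m (t + 2) := by
        exact Finset.prod_Icc_succ_top (by omega) _
      rw [hprod]
      have h22 : (2 : ℕ) + t = t + 2 := by omega
      rw [h22]
      have key : ∀ a b : F, a + b + a = b := fun a b => by
        have := CharTwo.add_self_eq_zero (R := F) a
        linear_combination this
      rw [Finset.sum_add_distrib, ← Finset.mul_sum]
      calc st.1 * m (t + 2)
            + (m (t + 2) * ∑ k ∈ Finset.Icc 2 (n - (t + 1)), st.2 k
               + ∑ k ∈ Finset.Icc 2 (n - (t + 1)), r (t + 2) k)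
            + m (t + 2) * st.2 (n - t)
            + ∑ k ∈ Finset.Icc 2 (n - (t + 1)), r (t + 2) k
          = m (t + 2) * (st.1 + ∑ k ∈ Finset.Icc 2 (n - t), st.2 k)
            + (∑ k ∈ Finset.Icc 2 (n - (t + 1)), r (t + 2) k
               + ∑ k ∈ Finset.Icc 2 (n - (t + 1)), r (t + 2) k) := by
            rw [hsplit]; ring
        _ = (∏ j ∈ Finset.Icc 2 (t + 1), m j) * m (t + 2)
            * ∑ i ∈ Finset.Icc 1 n, x i := by
            rw [ih, CharTwo.add_self_eq_zero, add_zero]; ring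

/-- **Functional correctness of the `B2Minv` gadget.**
Over a field of characteristic 2, if the additive shares `x 1, …, x n` sum to a
nonzero value, then every output share of the B2M conversion (namely the final `m₁`
and the inverses `(m j)⁻¹` for `j = 2, …, n`) is nonzero, and the share-wise inverses
of these output shares form a multiplicative sharing of `(x 1 + ⋯ + x n)⁻¹`. -/
theorem stmt_5 (F : Type*) [Field F] [CharP F 2] (n : ℕ) (hn : 1 ≤ n)
    (x m : ℕ → F) (r : ℕ → ℕ → F)
    (hm : ∀ j, 2 ≤ j → j ≤ n → m j ≠ 0)
    (hx : ∑ i ∈ Finset.Icc 1 n, x i ≠ 0) :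
    ((B2M n x m r).1 ≠ 0 ∧ ∀ j ∈ Finset.Icc 2 n, (m j)⁻¹ ≠ 0)
    ∧ ((B2M n x m r).1)⁻¹ * ∏ j ∈ Finset.Icc 2 n, ((m j)⁻¹)⁻¹
        = (∑ i ∈ Finset.Icc 1 n, x i)⁻¹ := by
  have h := outer_inv n hn x m r (n - 1) (by omega)
  have hIcc : Finset.Icc 2 (n - (n - 1)) = (∅ : Finset ℕ) := by
    rw [show n - (n - 1) = 1 by omega]; decide
  rw [hIcc, Finset.sum_empty, add_zero, show n - 1 + 1 = n by omega] at h
  have hB : (B2M n x m r).1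
      = (∏ j ∈ Finset.Icc 2 n, m j) * ∑ i ∈ Finset.Icc 1 n, x i := by
    unfold B2M; exact h
  have hP : (∏ j ∈ Finset.Icc 2 n, m j) ≠ 0 :=
    Finset.prod_ne_zero_iff.mpr fun j hj =>
      hm j (Finset.mem_Icc.mp hj).1 (Finset.mem_Icc.mp hj).2
  refine ⟨⟨by rw [hB]; exact mul_ne_zero hP hx,
      fun j hj => inv_ne_zero (hm j (Finset.mem_Icc.mp hj).1 (Finset.mem_Icc.mp hj).2)⟩, ?_⟩
  rw [hB, Finset.prod_congr rfl (fun j _ => inv_inv (m j)), mul_inv,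
    mul_comm (∏ j ∈ Finset.Icc 2 n, m j)⁻¹, mul_assoc,
    inv_mul_cancel₀ hP, mul_one]
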